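/- For any vector u ∈ U^K, the set M = {w ∈ U^K : marg w = Q} is nonempty whenever Q : U → ℚ takes values in multiples of 1/K, is nonnegative, and sums to 1; moreover min_{w ∈ M} #{k : w_k ≠ u_k} = K · d(marg u, Q). -/
import Mathlib

open Finset

noncomputable def marg {U : Type*} [Fintype U] [DecidableEq U] {K : ℕ} (w : Fin K → U) (x : U) : ℚ :=
  ((Finset.univ.filter fun k => w k = x).card : ℚ) / K

noncomputable def tv {U : Type*} [Fintype U] (Q Q' : U → ℚ) : ℚ :=
  ∑ x : U, max (Q x - Q' x) 0

section Aux

variable {U : Type*} [Fintype U] [DecidableEq U] {K : ℕ}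

private def cnt (w : Fin K → U) (x : U) : ℕ := (univ.filter fun k => w k = x).card

private lemma cnt_sum (w : Fin K → U) : ∑ x : U, cnt w x = K := by
  have h := Finset.card_eq_sum_card_fiberwise (f := w) (s := univ) (t := univ)
    (fun x _ => mem_univ _)
  simpa [cnt, Finset.card_univ] using h.symm

private lemma lower (n : U → ℕ) (hn : ∑ x : U, n x = K) (u w : Fin K → U)
    (hw : ∀ x, cnt w x = n x) :
    ∑ x : U, (cnt u x - n x) ≤ (univ.filter fun k => w k ≠ u k).card := by
  classical
  set m : U → ℕ := fun x => (univ.filter fun k => u k = x ∧ w k = x).card with hm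
  have hmc : ∀ x, m x ≤ cnt u x := by
    intro x
    apply Finset.card_le_card
    intro k hk
    simp only [mem_filter, mem_univ, true_and] at hk ⊢
    exact hk.1
  have hmn : ∀ x, m x ≤ n x := by
    intro x
    rw [← hw]
    apply Finset.card_le_card
    intro k hk
    simp only [mem_filter, mem_univ, true_and] at hk ⊢
    exact hk.2
  have h1 : ∑ x : U, (cnt u x - n x) ≤ ∑ x : U, (cnt u x - m x) :=
    Finset.sum_le_sum fun x _ => Nat.sub_le_sub_left (hmn x) _
  have h2 : ∑ x : U, (cnt u x - m x) + ∑ x : U, m x = K := by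
    rw [← Finset.sum_add_distrib]
    rw [show (∑ x : U, (cnt u x - m x + m x)) = ∑ x : U, cnt u x from
      Finset.sum_congr rfl fun x _ => Nat.sub_add_cancel (hmc x)]
    exact cnt_sum u
  have h3 : ∑ x : U, m x = (univ.filter fun k => w k = u k).card := by
    have h := Finset.card_eq_sum_card_fiberwise (f := u)
      (s := univ.filter fun k => w k = u k) (t := univ) (fun x _ => mem_univ _)
    rw [h]
    apply Finset.sum_congr rfl
    intro x _
    rw [hm]
    refine congrArg Finset.card ?_
    ext k
    simp only [mem_filter, mem_univ, true_and]
    constructor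
    · rintro ⟨h1, h2⟩; exact ⟨h2.trans h1.symm, h1⟩
    · rintro ⟨h1, h2⟩; exact ⟨h2, h1.trans h2⟩
  have h4 := Finset.card_filter_add_card_filter_not
    (s := (univ : Finset (Fin K))) (p := fun k => w k = u k)
  simp only [ne_eq, Finset.card_univ, Fintype.card_fin] at h4 ⊢
  omega

private lemma key (n : U → ℕ) (hn : ∑ x : U, n x = K) :
    ∀ D : ℕ, ∀ u : Fin K → U, ∑ x : U, (cnt u x - n x) = D →
      ∃ w : Fin K → U, (∀ x, cnt w x = n x) ∧
        (univ.filter fun k => w k ≠ u k).card ≤ D := by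
  intro D
  induction D with
  | zero =>
    intro u hD
    have hle : ∀ x, cnt u x ≤ n x := by
      intro x
      have := (Finset.sum_eq_zero_iff).mp hD x (mem_univ x)
      omega
    have heq : ∀ x, cnt u x = n x := by
      by_contra h
      push_neg at h
      obtain ⟨x, hx⟩ := h
      have : ∑ x : U, cnt u x < ∑ x : U, n x :=
        Finset.sum_lt_sum (fun z _ => hle z) ⟨x, mem_univ x, lt_of_le_of_ne (hle x) hx⟩
      rw [cnt_sum, hn] at this
      omega
    exact ⟨u, heq, by simp⟩
  | succ D ih =>
    intro u hD
    have hx : ∃ x, n x < cnt u x := by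
      by_contra h
      push_neg at h
      have : ∑ x : U, (cnt u x - n x) = 0 :=
        Finset.sum_eq_zero fun x _ => by have := h x; omega
      omega
    obtain ⟨x, hx⟩ := hx
    have hy : ∃ y, cnt u y < n y := by
      by_contra h
      push_neg at h
      have : ∑ z : U, n z < ∑ z : U, cnt u z :=
        Finset.sum_lt_sum (fun z _ => h z) ⟨x, mem_univ x, hx⟩
      rw [cnt_sum, hn] at this
      omega
    obtain ⟨y, hy⟩ := hy
    have hxy : x ≠ y := by rintro rfl; omega
    have hk : ∃ k, u k = x := by
      have hpos : 0 < cnt u x := by omega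
      obtain ⟨k, hk⟩ := Finset.card_pos.mp hpos
      exact ⟨k, (mem_filter.mp hk).2⟩
    obtain ⟨k, hk⟩ := hk
    set u' : Fin K → U := Function.update u k y with hu'
    have hcx : cnt u' x = cnt u x - 1 := by
      have hset : (univ.filter fun j => u' j = x) = (univ.filter fun j => u j = x).erase k := by
        ext j
        simp only [mem_filter, mem_univ, true_and, mem_erase, hu', Function.update_apply]
        by_cases hjk : j = k
        · subst hjk
          simp [hxy.symm, hk]
        · simp [hjk]
      rw [cnt, hset, Finset.card_erase_of_mem (by simp [hk]), cnt]
    have hcy : cnt u' y = cnt u y + 1 := by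
      have hset : (univ.filter fun j => u' j = y) = insert k (univ.filter fun j => u j = y) := by
        ext j
        simp only [mem_filter, mem_univ, true_and, mem_insert, hu', Function.update_apply]
        by_cases hjk : j = k
        · subst hjk; simp
        · simp [hjk]
      rw [cnt, hset, Finset.card_insert_of_notMem (by simp [hk, hxy]), cnt]
    have hcz : ∀ z, z ≠ x → z ≠ y → cnt u' z = cnt u z := by
      intro z hzx hzy
      unfold cnt
      congr 1
      ext j
      simp only [mem_filter, mem_univ, true_and, hu', Function.update_apply]
      by_cases hjk : j = k
      · subst hjk
        simp [hk, Ne.symm hzy, Ne.symm hzx]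
      · simp [hjk]
    have hfy : cnt u y + 1 ≤ n y := by omega
    have hfeq : ∀ z, z ≠ x → cnt u' z - n z = cnt u z - n z := by
      intro z hzx
      by_cases hzy : z = y
      · subst hzy; omega
      · rw [hcz z hzx hzy]
    have hD' : ∑ z : U, (cnt u' z - n z) = D := by
      have e1 : ∑ z ∈ univ.erase x, (cnt u' z - n z) = ∑ z ∈ univ.erase x, (cnt u z - n z) :=
        Finset.sum_congr rfl fun z hz => hfeq z (Finset.mem_erase.mp hz).1
      have e2 : (cnt u' x - n x) + ∑ z ∈ univ.erase x, (cnt u' z - n z)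
          = ∑ z : U, (cnt u' z - n z) :=
        Finset.add_sum_erase univ (fun z => cnt u' z - n z) (mem_univ x)
      have e3 : (cnt u x - n x) + ∑ z ∈ univ.erase x, (cnt u z - n z)
          = ∑ z : U, (cnt u z - n z) :=
        Finset.add_sum_erase univ (fun z => cnt u z - n z) (mem_univ x)
      rw [hcx] at e2
      omega
    obtain ⟨w, hw1, hw2⟩ := ih u' hD'
    refine ⟨w, hw1, ?_⟩
    have hsub : (univ.filter fun j => w j ≠ u j) ⊆
        insert k (univ.filter fun j => w j ≠ u' j) := by
      intro j hj
      simp only [mem_filter, mem_univ, true_and] at hj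
      by_cases hjk : j = k
      · subst hjk; exact mem_insert_self _ _
      · apply mem_insert_of_mem
        simp only [mem_filter, mem_univ, true_and, hu', Function.update_apply, hjk, if_false]
        exact hj
    calc (univ.filter fun j => w j ≠ u j).card
        ≤ (insert k (univ.filter fun j => w j ≠ u' j)).card := Finset.card_le_card hsub
      _ ≤ (univ.filter fun j => w j ≠ u' j).card + 1 := Finset.card_insert_le _ _
      _ ≤ D + 1 := by omega

end Aux

theorem stmt18 {U : Type*} [Fintype U] [DecidableEq U] [Nonempty U] {K : ℕ} (hK : 0 < K)
    (u : Fin K → U) (Q : U → ℚ)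
    (hQ0 : ∀ x, 0 ≤ Q x) (hQ1 : ∑ x : U, Q x = 1)
    (hQK : ∀ x, ∃ n : ℕ, Q x = (n : ℚ) / K) :
    (∃ w : Fin K → U, marg w = Q) ∧
    IsLeast {n : ℚ | ∃ w : Fin K → U, marg w = Q ∧
        n = ((Finset.univ.filter fun k => w k ≠ u k).card : ℚ)}
      ((K : ℚ) * tv (marg u) Q) := by
  classical
  have hK0 : (K : ℚ) ≠ 0 := by positivity
  set n : U → ℕ := fun x => (hQK x).choose with hndef
  have hnQ : ∀ x, Q x = (n x : ℚ) / K := fun x => (hQK x).choose_spec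
  have hn : ∑ x : U, n x = K := by
    have h : ((∑ x : U, n x : ℕ) : ℚ) = (K : ℚ) := by
      push_cast
      rw [show (∑ x : U, (n x : ℚ)) = ∑ x : U, Q x * K from
        Finset.sum_congr rfl fun x _ => by rw [hnQ x]; field_simp]
      rw [← Finset.sum_mul, hQ1, one_mul]
    exact_mod_cast h
  have hmw : ∀ (w : Fin K → U) (x : U), marg w x = (cnt w x : ℚ) / K := fun w x => rfl
  have marg_eq : ∀ w : Fin K → U, marg w = Q ↔ ∀ x, cnt w x = n x := by
    intro w
    constructor
    · intro h x
      have hx : (cnt w x : ℚ) / K = (n x : ℚ) / K := by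
        rw [← hmw, h, hnQ]
      field_simp at hx
      exact_mod_cast hx
    · intro h
      funext x
      rw [hmw, hnQ, h]
  set D : ℕ := ∑ x : U, (cnt u x - n x) with hDdef
  have htv : (K : ℚ) * tv (marg u) Q = (D : ℚ) := by
    rw [tv]
    have hterm : ∀ x : U, max (marg u x - Q x) 0 = ((cnt u x - n x : ℕ) : ℚ) / K := by
      intro x
      rw [hmw, hnQ x]
      rcases le_total (n x) (cnt u x) with h | h
      · rw [Nat.cast_sub h, sub_div]
        apply max_eq_left
        rw [sub_nonneg]
        gcongr

      · rw [Nat.sub_eq_zero_of_le h, Nat.cast_zero, zero_div]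
        apply max_eq_right
        rw [sub_nonpos]
        gcongr

    rw [Finset.sum_congr rfl fun x _ => hterm x, ← Finset.sum_div, hDdef]
    push_cast
    field_simp
  obtain ⟨w, hw1, hw2⟩ := key n hn D u hDdef.symm
  have hge := lower n hn u w hw1
  have hcard : (univ.filter fun k => w k ≠ u k).card = D := le_antisymm hw2 hge
  refine ⟨⟨w, (marg_eq w).mpr hw1⟩, ⟨⟨w, (marg_eq w).mpr hw1, ?_⟩, ?_⟩⟩
  · rw [htv, hcard]
  · rintro r ⟨v, hv, rfl⟩
    rw [htv]
    have hl := lower n hn u v ((marg_eq v).mp hv)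
    rw [← hDdef] at hl
    exact_mod_cast hl
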